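/- Let d ≥ 1 and let V, U, W ∈ ℂ[x] be polynomials, each of degree at most d, such that f := V² + U·W is monic of degree 2d−1. Consider the traceless 2×2 matrix A(x) with rows (V, U) and (W, −V) over ℂ[x]. Then there exists a constant invertible matrix g ∈ GL₂(ℂ) such that g·A(x)·g⁻¹ has the form with rows (V', U') and (W', −V'), where W' is monic of degree d, U' is monic of degree d−1, and V' has degree at most d−2 (V' = 0 when d = 1). Moreover, the matrix with rows (V', U'), (W', −V') satisfying these normalization conditions is the unique such matrix in the GL₂(ℂ)-conjugacy orbit of A(x). -/

import Mathlib

open Polynomial Matrix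

/-! ### Auxiliary definitions and lemmas -/

noncomputable def glOf12 (a b c e : ℂ) (h : a*e - b*c ≠ 0) : GL (Fin 2) ℂ :=
  ⟨!![a,b;c,e], !![(a*e-b*c)⁻¹*e, -((a*e-b*c)⁻¹*b); -((a*e-b*c)⁻¹*c), (a*e-b*c)⁻¹*a],
    by have h' : -(c*b) + a*e ≠ 0 := by intro h0; apply h; linear_combination h0
       ext i j; fin_cases i <;> fin_cases j <;>
      simp [Matrix.mul_apply, Fin.sum_univ_two] <;> field_simp <;> ring_nf <;>
        rw [← neg_mul, ← add_mul] <;> exact mul_inv_cancel₀ h',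
    by ext i j; fin_cases i <;> fin_cases j <;>
      simp [Matrix.mul_apply, Fin.sum_univ_two] <;> field_simp <;> ring⟩

lemma map_C_fin_two12 (a b c e : ℂ) :
    (!![a,b;c,e]).map Polynomial.C = !![C a, C b; C c, C e] := by
  ext i j; fin_cases i <;> fin_cases j <;> simp

def ConjRel12 (V U W V' U' W' : Polynomial ℂ) : Prop :=
  ∃ g : GL (Fin 2) ℂ,
    ((g : Matrix (Fin 2) (Fin 2) ℂ).map Polynomial.C) *
        Matrix.of ![![V, U], ![W, -V]] *
        (((g⁻¹ : GL (Fin 2) ℂ) : Matrix (Fin 2) (Fin 2) ℂ).map Polynomial.C) =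
      Matrix.of ![![V', U'], ![W', -V']]

lemma conj_step12 (a b c e : ℂ) (h : a*e - b*c ≠ 0) (V U W : Polynomial ℂ) :
    ConjRel12 V U W
      (C (a*e-b*c)⁻¹ * (C (a*e+b*c) * V + C (-(a*c)) * U + C (b*e) * W))
      (C (a*e-b*c)⁻¹ * (C (-(2*a*b)) * V + C (a*a) * U + C (-(b*b)) * W))
      (C (a*e-b*c)⁻¹ * (C (2*c*e) * V + C (-(c*c)) * U + C (e*e) * W)) := by
  refine ⟨glOf12 a b c e h, ?_⟩
  have h2 : (((glOf12 a b c e h)⁻¹ : GL (Fin 2) ℂ) : Matrix (Fin 2) (Fin 2) ℂ) =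
    !![(a*e-b*c)⁻¹*e, -((a*e-b*c)⁻¹*b); -((a*e-b*c)⁻¹*c), (a*e-b*c)⁻¹*a] := rfl
  have h1 : ((glOf12 a b c e h : GL (Fin 2) ℂ) : Matrix (Fin 2) (Fin 2) ℂ) = !![a,b;c,e] := rfl
  have h3 : Matrix.of ![![V, U], ![W, -V]] = !![V, U; W, -V] := rfl
  rw [h1, h2, h3, map_C_fin_two12, map_C_fin_two12]
  refine Matrix.ext fun i j => ?_
  fin_cases i <;> fin_cases j <;>
    · simp only [Matrix.mul_fin_two, Matrix.of_apply, Fin.mk_zero, Fin.mk_one, Fin.isValue,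
        Matrix.cons_val', Matrix.cons_val_zero, Matrix.cons_val_one, Matrix.head_cons,
        Matrix.empty_val', Matrix.cons_val_fin_one, Matrix.head_fin_const,
        Polynomial.C_mul, Polynomial.C_add, map_neg, map_ofNat]
      ring

lemma det_conj12 (a b c e : ℂ) (h : a*e - b*c ≠ 0) (V U W : Polynomial ℂ) :
    (C (a*e-b*c)⁻¹ * (C (a*e+b*c) * V + C (-(a*c)) * U + C (b*e) * W))^2 +
    (C (a*e-b*c)⁻¹ * (C (-(2*a*b)) * V + C (a*a) * U + C (-(b*b)) * W)) *
    (C (a*e-b*c)⁻¹ * (C (2*c*e) * V + C (-(c*c)) * U + C (e*e) * W)) = V^2 + U*W := by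
  have hone : C ((a*e-b*c)⁻¹) * (C a * C e - C b * C c) = 1 := by
    rw [← C_mul, ← C_mul, ← C_sub, ← C_mul, inv_mul_cancel₀ h, C_1]
  simp only [C_mul, C_add, C_sub, map_neg, map_ofNat]
  linear_combination (C ((a*e-b*c)⁻¹) * (C a * C e - C b * C c) + 1) * (V^2+U*W) * hone

lemma comb_coeff12 (k α β γ : ℂ) (V U W : Polynomial ℂ) (m : ℕ) :
    (C k * (C α * V + C β * U + C γ * W)).coeff m =
      k * (α * V.coeff m + β * U.coeff m + γ * W.coeff m) := by
  simp [coeff_add, coeff_C_mul, mul_add]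

lemma comb_degree_le12 (k α β γ : ℂ) {V U W : Polynomial ℂ} {n : ℕ}
    (hV : V.degree ≤ n) (hU : U.degree ≤ n) (hW : W.degree ≤ n) :
    (C k * (C α * V + C β * U + C γ * W)).degree ≤ n := by
  have h3 : ∀ (c : ℂ) (p : Polynomial ℂ), p.degree ≤ n → (C c * p).degree ≤ (n : WithBot ℕ) :=
    fun c p hp => (degree_mul_le _ _).trans (by simpa using add_le_add (degree_C_le) hp)
  exact h3 _ _ (((degree_add_le _ _).trans (max_le ((degree_add_le _ _).trans
    (max_le (h3 _ _ hV) (h3 _ _ hU))) (h3 _ _ hW))))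

lemma natDeg_le_pred12 {p : Polynomial ℂ} {n : ℕ} (h1 : p.degree ≤ n) (h2 : p.coeff n = 0) :
    p.natDegree ≤ n - 1 := by
  rw [natDegree_le_iff_degree_le, degree_le_iff_coeff_zero]
  intro m hm
  have hm2 : n - 1 < m := by exact_mod_cast hm
  have hm' : n ≤ m := by omega
  rcases eq_or_lt_of_le hm' with h | h
  · exact h ▸ h2
  · exact coeff_eq_zero_of_degree_lt (h1.trans_lt (by exact_mod_cast h))

lemma monic_of12 {p : Polynomial ℂ} {n : ℕ} (h1 : p.degree ≤ n) (h2 : p.coeff n = 1) :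
    p.Monic ∧ p.natDegree = n := by
  have hdeg : p.degree = n := le_antisymm h1 (le_degree_of_ne_zero (by rw [h2]; exact one_ne_zero))
  have hnat : p.natDegree = n := natDegree_eq_of_degree_eq_some hdeg
  exact ⟨by rwa [Monic, leadingCoeff, hnat], hnat⟩

lemma deg_lt_of12 (d : ℕ) (hd : 0 < d) {p : Polynomial ℂ} (h1 : p.degree ≤ d)
    (h2 : p.coeff d = 0) (h3 : p.coeff (d-1) = 0) :
    p.degree < ((d - 1 : ℕ) : WithBot ℕ) := by
  rw [degree_lt_iff_coeff_zero]
  intro m hm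
  have hm' : d - 1 ≤ m := by exact_mod_cast hm
  rcases Nat.lt_or_ge m d with h | h
  · have : m = d - 1 := by omega
    exact this ▸ h3
  · rcases eq_or_lt_of_le h with h | h
    · exact h ▸ h2
    · exact coeff_eq_zero_of_degree_lt (h1.trans_lt (by exact_mod_cast h))

lemma mapC_mul12 (M N : Matrix (Fin 2) (Fin 2) ℂ) :
    (M * N).map Polynomial.C = M.map Polynomial.C * N.map Polynomial.C :=
  Matrix.map_mul

lemma mapC_gl_inv_mul12 (g : GL (Fin 2) ℂ) :
    (((g⁻¹ : GL (Fin 2) ℂ) : Matrix (Fin 2) (Fin 2) ℂ).map Polynomial.C) *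
      ((g : Matrix (Fin 2) (Fin 2) ℂ).map Polynomial.C) = 1 := by
  rw [← mapC_mul12]
  have : ((g⁻¹ : GL (Fin 2) ℂ) : Matrix (Fin 2) (Fin 2) ℂ) * (g : Matrix (Fin 2) (Fin 2) ℂ)
      = 1 := by rw [← Units.val_mul, inv_mul_cancel, Units.val_one]
  rw [this, Matrix.map_one _ (map_zero C) (map_one C)]

lemma mapC_gl_mul_inv12 (g : GL (Fin 2) ℂ) :
    ((g : Matrix (Fin 2) (Fin 2) ℂ).map Polynomial.C) *
      (((g⁻¹ : GL (Fin 2) ℂ) : Matrix (Fin 2) (Fin 2) ℂ).map Polynomial.C) = 1 := by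
  rw [← mapC_mul12]
  have : (g : Matrix (Fin 2) (Fin 2) ℂ) * ((g⁻¹ : GL (Fin 2) ℂ) : Matrix (Fin 2) (Fin 2) ℂ)
      = 1 := by rw [← Units.val_mul, mul_inv_cancel, Units.val_one]
  rw [this, Matrix.map_one _ (map_zero C) (map_one C)]

lemma ConjRel12.trans {V U W V' U' W' V₂ U₂ W₂ : Polynomial ℂ}
    (h1 : ConjRel12 V U W V' U' W') (h2 : ConjRel12 V' U' W' V₂ U₂ W₂) :
    ConjRel12 V U W V₂ U₂ W₂ := by
  obtain ⟨g1, hg1⟩ := h1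
  obtain ⟨g2, hg2⟩ := h2
  refine ⟨g2 * g1, ?_⟩
  have hc : ((g2 * g1 : GL (Fin 2) ℂ) : Matrix (Fin 2) (Fin 2) ℂ)
      = (g2 : Matrix (Fin 2) (Fin 2) ℂ) * (g1 : Matrix (Fin 2) (Fin 2) ℂ) := rfl
  have hci : (((g2 * g1)⁻¹ : GL (Fin 2) ℂ) : Matrix (Fin 2) (Fin 2) ℂ)
      = ((g1⁻¹ : GL (Fin 2) ℂ) : Matrix (Fin 2) (Fin 2) ℂ) *
        ((g2⁻¹ : GL (Fin 2) ℂ) : Matrix (Fin 2) (Fin 2) ℂ) := by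
    rw [_root_.mul_inv_rev]; rfl
  rw [hc, hci, mapC_mul12, mapC_mul12, ← hg2, ← hg1]
  noncomm_ring

lemma ConjRel12.symm {V U W V' U' W' : Polynomial ℂ}
    (h : ConjRel12 V U W V' U' W') : ConjRel12 V' U' W' V U W := by
  obtain ⟨g, hg⟩ := h
  refine ⟨g⁻¹, ?_⟩
  rw [inv_inv, ← hg]
  calc (((g⁻¹ : GL (Fin 2) ℂ) : Matrix (Fin 2) (Fin 2) ℂ).map Polynomial.C) *
        (((g : Matrix (Fin 2) (Fin 2) ℂ).map Polynomial.C) *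
          Matrix.of ![![V, U], ![W, -V]] *
          (((g⁻¹ : GL (Fin 2) ℂ) : Matrix (Fin 2) (Fin 2) ℂ).map Polynomial.C)) *
        ((g : Matrix (Fin 2) (Fin 2) ℂ).map Polynomial.C)
      = ((((g⁻¹ : GL (Fin 2) ℂ) : Matrix (Fin 2) (Fin 2) ℂ).map Polynomial.C) *
          ((g : Matrix (Fin 2) (Fin 2) ℂ).map Polynomial.C)) *
          Matrix.of ![![V, U], ![W, -V]] *
        ((((g⁻¹ : GL (Fin 2) ℂ) : Matrix (Fin 2) (Fin 2) ℂ).map Polynomial.C) *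
          ((g : Matrix (Fin 2) (Fin 2) ℂ).map Polynomial.C)) := by noncomm_ring
    _ = Matrix.of ![![V, U], ![W, -V]] := by rw [mapC_gl_inv_mul12]; noncomm_ring

/-- Uniqueness: two normalized triples in the same orbit are equal. -/
lemma uniq12 (d : ℕ) (hd : 0 < d) (V' U' W' V₂ U₂ W₂ : Polynomial ℂ)
    (n1 : W'.Monic) (n2 : W'.natDegree = d) (n3 : U'.Monic) (n4 : U'.natDegree = d - 1)
    (n5 : V'.degree < ((d - 1 : ℕ) : WithBot ℕ))
    (m1 : W₂.Monic) (m2 : W₂.natDegree = d) (m3 : U₂.Monic) (m4 : U₂.natDegree = d - 1)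
    (m5 : V₂.degree < ((d - 1 : ℕ) : WithBot ℕ))
    (h : ConjRel12 V' U' W' V₂ U₂ W₂) : V₂ = V' ∧ U₂ = U' ∧ W₂ = W' := by
  -- coefficient facts
  have hd1d : ((d - 1 : ℕ) : WithBot ℕ) ≤ (d : ℕ) := by exact_mod_cast Nat.sub_le d 1
  have hd1d' : ((d - 1 : ℕ) : WithBot ℕ) ≤ ((d - 1 : ℕ) : WithBot ℕ) := le_refl _
  have cV'd : V'.coeff d = 0 :=
    coeff_eq_zero_of_degree_lt (lt_of_lt_of_le n5 hd1d)
  have cV'd1 : V'.coeff (d - 1) = 0 := coeff_eq_zero_of_degree_lt n5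
  have cV2d : V₂.coeff d = 0 := coeff_eq_zero_of_degree_lt (lt_of_lt_of_le m5 hd1d)
  have cV2d1 : V₂.coeff (d - 1) = 0 := coeff_eq_zero_of_degree_lt m5
  have cU'd : U'.coeff d = 0 := coeff_eq_zero_of_natDegree_lt (by omega)
  have cU2d : U₂.coeff d = 0 := coeff_eq_zero_of_natDegree_lt (by omega)
  have cU'd1 : U'.coeff (d - 1) = 1 := by rw [← n4]; exact n3.coeff_natDegree
  have cU2d1 : U₂.coeff (d - 1) = 1 := by rw [← m4]; exact m3.coeff_natDegree
  have cW'd : W'.coeff d = 1 := by rw [← n2]; exact n1.coeff_natDegree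
  have cW2d : W₂.coeff d = 1 := by rw [← m2]; exact m1.coeff_natDegree
  obtain ⟨g, hg⟩ := h
  have key : (((g : Matrix (Fin 2) (Fin 2) ℂ)).map Polynomial.C) * Matrix.of ![![V', U'], ![W', -V']] =
      Matrix.of ![![V₂, U₂], ![W₂, -V₂]] * (((g : Matrix (Fin 2) (Fin 2) ℂ)).map Polynomial.C) := by
    have := congrArg (fun X => X * (((g : Matrix (Fin 2) (Fin 2) ℂ)).map Polynomial.C)) hg
    simpa only [mul_assoc, mapC_gl_inv_mul12, mul_one] using this
  set M : Matrix (Fin 2) (Fin 2) ℂ := (g : Matrix (Fin 2) (Fin 2) ℂ) with hM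
  set a : ℂ := M 0 0
  set b : ℂ := M 0 1
  set c : ℂ := M 1 0
  set e : ℂ := M 1 1
  have hMeta : M = !![a, b; c, e] := Matrix.eta_fin_two M
  have hdet : a * e - b * c ≠ 0 := by
    have hu : IsUnit M.det := (Matrix.isUnit_iff_isUnit_det M).mp ⟨g, rfl⟩
    have : M.det = a * e - b * c := by rw [hMeta]; simp [Matrix.det_fin_two]
    rw [this] at hu
    exact hu.ne_zero
  rw [hMeta, map_C_fin_two12] at key
  have h3 : Matrix.of ![![V', U'], ![W', -V']] = !![V', U'; W', -V'] := rfl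
  have h4 : Matrix.of ![![V₂, U₂], ![W₂, -V₂]] = !![V₂, U₂; W₂, -V₂] := rfl
  rw [h3, h4, Matrix.mul_fin_two, Matrix.mul_fin_two] at key
  have E00 : C a * V' + C b * W' = V₂ * C a + U₂ * C c := by
    have := congrArg (fun X : Matrix (Fin 2) (Fin 2) (Polynomial ℂ) => X 0 0) key
    simpa using this
  have E01 : C a * U' + C b * (-V') = V₂ * C b + U₂ * C e := by
    have := congrArg (fun X : Matrix (Fin 2) (Fin 2) (Polynomial ℂ) => X 0 1) key
    simpa using this
  have E10 : C c * V' + C e * W' = W₂ * C a + (-V₂) * C c := by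
    have := congrArg (fun X : Matrix (Fin 2) (Fin 2) (Polynomial ℂ) => X 1 0) key
    simpa using this
  -- coefficient extraction
  have hb : b = 0 := by
    have := congrArg (fun p => p.coeff d) E00
    simpa [coeff_add, coeff_C_mul, coeff_mul_C, cV'd, cW'd, cV2d, cU2d] using this
  have hea : e = a := by
    have := congrArg (fun p => p.coeff d) E10
    simpa [coeff_add, coeff_C_mul, coeff_mul_C, coeff_neg, cV'd, cW'd, cV2d, cW2d] using this
  have hc : c = 0 := by
    have := congrArg (fun p => p.coeff (d - 1)) E00
    simp [coeff_add, coeff_C_mul, coeff_mul_C, cV'd1, cV2d1, cU2d1, hb] at this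
    exact this.symm
  have ha : a ≠ 0 := by
    intro h0
    apply hdet
    rw [h0, hb, hc, hea, h0]; ring
  have hCa : (C a : Polynomial ℂ) ≠ 0 := fun h0 => ha (by simpa using h0)
  constructor
  · -- V₂ = V'
    have : C a * V' = C a * V₂ := by
      rw [hb, hc] at E00
      simpa [mul_comm] using E00
    exact (mul_left_cancel₀ hCa this).symm
  constructor
  · have : C a * U' = C a * U₂ := by
      rw [hb, hea] at E01
      simpa [mul_comm] using E01
    exact (mul_left_cancel₀ hCa this).symm
  · have : C a * W' = C a * W₂ := by
      rw [hc, hea] at E10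
      simpa [mul_comm] using E10
    exact (mul_left_cancel₀ hCa this).symm
lemma stage212 (d : ℕ) (hd : 0 < d) (V U W V₁ U₁ W₁ : Polynomial ℂ)
    (hf : (V ^ 2 + U * W).Monic) (hfdeg : (V ^ 2 + U * W).natDegree = 2 * d - 1)
    (step1 : ConjRel12 V U W V₁ U₁ W₁)
    (dV₁ : V₁.degree ≤ (d : ℕ)) (dU₁ : U₁.degree ≤ (d : ℕ)) (dW₁ : W₁.degree ≤ (d : ℕ))
    (cV₁ : V₁.coeff d = 0) (cU₁ : U₁.coeff d = 0) (cW₁ : W₁.coeff d = 1)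
    (hdetinv : V₁ ^ 2 + U₁ * W₁ = V ^ 2 + U * W) :
    ∃ V' U' W' : Polynomial ℂ,
      (W'.Monic ∧ W'.natDegree = d ∧ U'.Monic ∧ U'.natDegree = d - 1 ∧
        V'.degree < ((d - 1 : ℕ) : WithBot ℕ)) ∧ ConjRel12 V U W V' U' W' := by
  have hcoef1 : (V ^ 2 + U * W).coeff (2 * d - 1) = 1 := by
    have := hf.coeff_natDegree; rwa [hfdeg] at this
  have hnV₁ : V₁.natDegree ≤ d - 1 := natDeg_le_pred12 dV₁ cV₁
  have hnU₁ : U₁.natDegree ≤ d - 1 := natDeg_le_pred12 dU₁ cU₁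
  have hnW₁ : W₁.natDegree ≤ d := natDegree_le_iff_degree_le.mpr dW₁
  have hU₁d1 : U₁.coeff (d - 1) = 1 := by
    have h1 : (V₁ ^ 2).coeff (2 * d - 1) = 0 :=
      coeff_eq_zero_of_natDegree_lt (lt_of_le_of_lt natDegree_pow_le (by omega))
    have h2 : (U₁ * W₁).coeff ((d - 1) + d) = U₁.coeff (d - 1) * W₁.coeff d :=
      coeff_mul_add_eq_of_natDegree_le hnU₁ hnW₁
    have h3 : (d - 1) + d = 2 * d - 1 := by omega
    have h4 : (V₁ ^ 2 + U₁ * W₁).coeff (2 * d - 1) = 1 := by rw [hdetinv]; exact hcoef1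
    rw [coeff_add, h1, zero_add, ← h3, h2, cW₁, mul_one] at h4
    exact h4
  set t := V₁.coeff (d - 1) with ht
  have hdet2 : (1 : ℂ) * 1 - 0 * t ≠ 0 := by norm_num
  have step2 := conj_step12 1 0 t 1 hdet2 V₁ U₁ W₁
  set V₂ := C ((1:ℂ)*1-0*t)⁻¹ * (C ((1:ℂ)*1+0*t) * V₁ + C (-((1:ℂ)*t)) * U₁ + C ((0:ℂ)*1) * W₁)
    with hV₂
  set U₂ := C ((1:ℂ)*1-0*t)⁻¹ * (C (-(2*(1:ℂ)*0)) * V₁ + C ((1:ℂ)*1) * U₁ + C (-((0:ℂ)*0)) * W₁)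
    with hU₂
  set W₂ := C ((1:ℂ)*1-0*t)⁻¹ * (C (2*t*(1:ℂ)) * V₁ + C (-(t*t)) * U₁ + C ((1:ℂ)*1) * W₁)
    with hW₂
  have dV₂ : V₂.degree ≤ (d : ℕ) := comb_degree_le12 _ _ _ _ dV₁ dU₁ dW₁
  have dU₂ : U₂.degree ≤ (d : ℕ) := comb_degree_le12 _ _ _ _ dV₁ dU₁ dW₁
  have dW₂ : W₂.degree ≤ (d : ℕ) := comb_degree_le12 _ _ _ _ dV₁ dU₁ dW₁
  have cV₂d : V₂.coeff d = 0 := by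
    rw [hV₂, comb_coeff12, cV₁, cU₁, cW₁]; norm_num
  have cV₂d1 : V₂.coeff (d - 1) = 0 := by
    rw [hV₂, comb_coeff12, hU₁d1, ← ht]; norm_num
  have cU₂d : U₂.coeff d = 0 := by
    rw [hU₂, comb_coeff12, cV₁, cU₁, cW₁]; norm_num
  have cU₂d1 : U₂.coeff (d - 1) = 1 := by
    rw [hU₂, comb_coeff12, hU₁d1]; norm_num
  have cW₂d : W₂.coeff d = 1 := by
    rw [hW₂, comb_coeff12, cV₁, cU₁, cW₁]; norm_num
  obtain ⟨mW, nW⟩ := monic_of12 dW₂ cW₂d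
  have dU₂' : U₂.degree ≤ ((d - 1 : ℕ) : WithBot ℕ) :=
    natDegree_le_iff_degree_le.mp (natDeg_le_pred12 dU₂ cU₂d)
  obtain ⟨mU, nU⟩ := monic_of12 dU₂' cU₂d1
  have vlt := deg_lt_of12 d hd dV₂ cV₂d cV₂d1
  exact ⟨V₂, U₂, W₂, ⟨mW, nW, mU, nU, vlt⟩, step1.trans step2⟩

/-- Normal form for traceless `2×2` polynomial matrices whose characteristic polynomial
is monic of degree `2d−1` (nilpotent leading coefficient): a unique representative of the
`GL₂(ℂ)`-conjugacy orbit with `W'` monic of degree `d`, `U'` monic of degree `d−1`, and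
`deg V' ≤ d−2` (`V' = 0` when `d = 1`). -/
theorem stmt12 (d : ℕ) (hd : 0 < d) (V U W : Polynomial ℂ)
    (hV : V.degree ≤ d) (hU : U.degree ≤ d) (hW : W.degree ≤ d)
    (hf : (V ^ 2 + U * W).Monic) (hfdeg : (V ^ 2 + U * W).natDegree = 2 * d - 1) :
    ∃ V' U' W' : Polynomial ℂ,
      (W'.Monic ∧ W'.natDegree = d ∧ U'.Monic ∧ U'.natDegree = d - 1 ∧
        V'.degree < ((d - 1 : ℕ) : WithBot ℕ)) ∧
      (∃ g : GL (Fin 2) ℂ,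
        ((g : Matrix (Fin 2) (Fin 2) ℂ).map Polynomial.C) *
            Matrix.of ![![V, U], ![W, -V]] *
            (((g⁻¹ : GL (Fin 2) ℂ) : Matrix (Fin 2) (Fin 2) ℂ).map Polynomial.C) =
          Matrix.of ![![V', U'], ![W', -V']]) ∧
      ∀ V₂ U₂ W₂ : Polynomial ℂ,
        (W₂.Monic ∧ W₂.natDegree = d ∧ U₂.Monic ∧ U₂.natDegree = d - 1 ∧
          V₂.degree < ((d - 1 : ℕ) : WithBot ℕ)) →
        (∃ g : GL (Fin 2) ℂ,
          ((g : Matrix (Fin 2) (Fin 2) ℂ).map Polynomial.C) *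
              Matrix.of ![![V, U], ![W, -V]] *
              (((g⁻¹ : GL (Fin 2) ℂ) : Matrix (Fin 2) (Fin 2) ℂ).map Polynomial.C) =
            Matrix.of ![![V₂, U₂], ![W₂, -V₂]]) →
        V₂ = V' ∧ U₂ = U' ∧ W₂ = W' := by
  have hVn : V.natDegree ≤ d := natDegree_le_iff_degree_le.mpr hV
  have hUn : U.natDegree ≤ d := natDegree_le_iff_degree_le.mpr hU
  have hWn : W.natDegree ≤ d := natDegree_le_iff_degree_le.mpr hW
  have hcoef1 : (V ^ 2 + U * W).coeff (2 * d - 1) = 1 := by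
    have := hf.coeff_natDegree; rwa [hfdeg] at this
  -- leading coefficients
  have e0 : (V ^ 2 + U * W).coeff (2 * d) = 0 :=
    coeff_eq_zero_of_natDegree_lt (by omega)
  have e1 : (V * V).coeff (d + d) = V.coeff d * V.coeff d :=
    coeff_mul_add_eq_of_natDegree_le hVn hVn
  have e2 : (U * W).coeff (d + d) = U.coeff d * W.coeff d :=
    coeff_mul_add_eq_of_natDegree_le hUn hWn
  have hvw : V.coeff d * V.coeff d + U.coeff d * W.coeff d = 0 := by
    rw [two_mul, coeff_add, sq, e1, e2] at e0
    exact e0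
  -- we first find a conjugate with coefficient matrix at `x^d` equal to `E₂₁`
  suffices hsuff : ∃ V₁ U₁ W₁ : Polynomial ℂ, ConjRel12 V U W V₁ U₁ W₁ ∧
      V₁.degree ≤ (d : ℕ) ∧ U₁.degree ≤ (d : ℕ) ∧ W₁.degree ≤ (d : ℕ) ∧
      V₁.coeff d = 0 ∧ U₁.coeff d = 0 ∧ W₁.coeff d = 1 ∧
      V₁ ^ 2 + U₁ * W₁ = V ^ 2 + U * W by
    obtain ⟨V₁, U₁, W₁, step1, dV₁, dU₁, dW₁, cV₁, cU₁, cW₁, hdetinv⟩ := hsuff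
    obtain ⟨V', U', W', hnorm, hconj⟩ :=
      stage212 d hd V U W V₁ U₁ W₁ hf hfdeg step1 dV₁ dU₁ dW₁ cV₁ cU₁ cW₁ hdetinv
    refine ⟨V', U', W', hnorm, hconj, ?_⟩
    intro V₂ U₂ W₂ hnorm2 hconj2
    obtain ⟨n1, n2, n3, n4, n5⟩ := hnorm
    obtain ⟨m1, m2, m3, m4, m5⟩ := hnorm2
    exact uniq12 d hd V' U' W' V₂ U₂ W₂ n1 n2 n3 n4 n5 m1 m2 m3 m4 m5
      ((ConjRel12.symm hconj).trans hconj2)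
  by_cases hw : W.coeff d = 0
  · -- then the top coefficient of V vanishes, and that of U is nonzero
    have hv : V.coeff d = 0 := by
      have : V.coeff d * V.coeff d = 0 := by
        have := hvw; rw [hw, mul_zero, add_zero] at this; exact this
      exact mul_self_eq_zero.mp this
    have hu : U.coeff d ≠ 0 := by
      intro hu0
      have hnV : V.natDegree ≤ d - 1 := natDeg_le_pred12 hV hv
      have hnU : U.natDegree ≤ d - 1 := natDeg_le_pred12 hU hu0
      have hnW : W.natDegree ≤ d - 1 := natDeg_le_pred12 hW hw
      have z1 : (V ^ 2).coeff (2 * d - 1) = 0 :=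
        coeff_eq_zero_of_natDegree_lt (lt_of_le_of_lt natDegree_pow_le (by omega))
      have z2 : (U * W).coeff (2 * d - 1) = 0 :=
        coeff_eq_zero_of_natDegree_lt (lt_of_le_of_lt natDegree_mul_le (by omega))
      rw [coeff_add, z1, z2, add_zero] at hcoef1
      exact zero_ne_one hcoef1
    -- conjugate by `[[0,1],[u⁻¹,0]]`
    have hdet1 : (0 : ℂ) * 0 - 1 * (U.coeff d)⁻¹ ≠ 0 := by
      simpa using inv_ne_zero hu
    refine ⟨_, _, _, conj_step12 0 1 (U.coeff d)⁻¹ 0 hdet1 V U W,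
      comb_degree_le12 _ _ _ _ hV hU hW, comb_degree_le12 _ _ _ _ hV hU hW,
      comb_degree_le12 _ _ _ _ hV hU hW, ?_, ?_, ?_,
      det_conj12 0 1 (U.coeff d)⁻¹ 0 hdet1 V U W⟩
    · rw [comb_coeff12, hv, hw]; field_simp; ring
    · rw [comb_coeff12, hv, hw]; field_simp; ring
    · rw [comb_coeff12, hv, hw]; field_simp; ring
  · -- conjugate by `[[1, -v/w],[0, w⁻¹]]`
    have hdet1 : (1 : ℂ) * (W.coeff d)⁻¹ - (-(V.coeff d / W.coeff d)) * 0 ≠ 0 := by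
      simpa using inv_ne_zero hw
    refine ⟨_, _, _, conj_step12 1 (-(V.coeff d / W.coeff d)) 0 (W.coeff d)⁻¹ hdet1 V U W,
      comb_degree_le12 _ _ _ _ hV hU hW, comb_degree_le12 _ _ _ _ hV hU hW,
      comb_degree_le12 _ _ _ _ hV hU hW, ?_, ?_, ?_,
      det_conj12 1 (-(V.coeff d / W.coeff d)) 0 (W.coeff d)⁻¹ hdet1 V U W⟩
    · rw [comb_coeff12]; field_simp; ring
    · rw [comb_coeff12]; field_simp
      linear_combination hvw
    · rw [comb_coeff12]; field_simp; ring
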